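/- For k₁, k₂ ≥ 0, let V^{k₁}, V^{k₂} ∈ C²((0, z̄)) ∩ C¹([0, z̄]) be solutions of the auxiliary HJB equation -（σ²/2）V'' + ρV - (1-γ)(γ/w)^{γ/(1-γ)} max(0,V')^{1/(1-γ)} - k_i V' - z^α/B^{α-1} = 0 with Neumann boundary conditions, each satisfying the gradient bound 0 ≤ (V^{k_i})' ≤ M := [z̄^α/((1-γ)B^{α-1})]^{1-γ}(w/γ)^γ. Then ‖V^{k₁} - V^{k₂}‖_∞ ≤ (M/ρ) |k₁ - k₂|. -/

import Mathlib

set_option maxHeartbeats 4000000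
open Set Filter Topology


lemma rpow_diff_le {p q MM r : ℝ} (hq : 0 ≤ q) (hpq : q ≤ p) (hpM : p ≤ MM) (hr : 1 ≤ r) :
    p ^ r - q ^ r ≤ r * MM ^ (r - 1) * (p - q) := by
  rcases eq_or_lt_of_le hpq with h | h
  · simp [h]
  · obtain ⟨c, hc, hceq⟩ := exists_hasDerivAt_eq_slope (fun x => x ^ r)
      (fun x => r * x ^ (r - 1)) h
      (fun x _ => (Real.continuousAt_rpow_const x r (Or.inr (by linarith))).continuousWithinAt)
      (fun x _ => Real.hasDerivAt_rpow_const (Or.inr hr))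
    have hc0 : 0 ≤ c := le_trans hq hc.1.le
    have hcM : c ≤ MM := le_trans hc.2.le hpM
    have hpow : c ^ (r - 1) ≤ MM ^ (r - 1) :=
      Real.rpow_le_rpow hc0 hcM (by linarith)
    have hslope : p ^ r - q ^ r = r * c ^ (r - 1) * (p - q) := by
      rw [hceq, div_mul_cancel₀]
      exact sub_ne_zero_of_ne h.ne'
    rw [hslope]
    have : r * c ^ (r - 1) ≤ r * MM ^ (r - 1) :=
      mul_le_mul_of_nonneg_left hpow (by linarith)
    exact mul_le_mul_of_nonneg_right this (by linarith)


lemma interior_max_facts {f g : ℝ → ℝ} {a b z₀ c : ℝ}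
    (h₀ : z₀ ∈ Set.Ioo a b)
    (hfg : ∀ z ∈ Set.Ioo a b, HasDerivAt f (g z) z)
    (hgc : HasDerivAt g c z₀)
    (hmax : ∀ z ∈ Set.Ioo a b, f z ≤ f z₀) :
    g z₀ = 0 ∧ c ≤ 0 := by
  have hloc : IsLocalMax f z₀ :=
    Filter.eventually_of_mem (isOpen_Ioo.mem_nhds h₀) hmax
  have hg0 : g z₀ = 0 := hloc.hasDerivAt_eq_zero (hfg z₀ h₀)
  refine ⟨hg0, ?_⟩
  by_contra hc
  push_neg at hc
  have hslope : Tendsto (slope g z₀) (𝓝[≠] z₀) (𝓝 c) :=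
    hasDerivAt_iff_tendsto_slope.1 hgc
  have hev : ∀ᶠ z in 𝓝[≠] z₀, 0 < slope g z₀ z :=
    hslope.eventually (eventually_gt_nhds hc)
  have hev' : ∀ᶠ z in 𝓝[>] z₀, 0 < slope g z₀ z :=
    hev.filter_mono (nhdsWithin_mono _ (fun x hx => ne_of_gt hx))
  obtain ⟨u, hu, hsub⟩ := mem_nhdsGT_iff_exists_Ioo_subset.1 hev'
  set m := min u b with hm
  have hzm : z₀ < m := lt_min hu h₀.2
  set t := (z₀ + m) / 2 with ht
  have htm : t < m := by simp only [ht]; linarith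
  have hzt : z₀ < t := by simp only [ht]; linarith
  have hIcc : Icc z₀ t ⊆ Ioo a b := fun x hx =>
    ⟨lt_of_lt_of_le h₀.1 hx.1, lt_of_le_of_lt hx.2 (lt_of_lt_of_le htm (min_le_right _ _))⟩
  have hgpos : ∀ x ∈ Ioo z₀ t, 0 < g x := by
    intro x hx
    have hxIoo : x ∈ Ioo z₀ u :=
      ⟨hx.1, lt_of_lt_of_le (lt_trans hx.2 htm) (min_le_left _ _)⟩
    have hgx : 0 < slope g z₀ x := hsub hxIoo
    rw [slope_def_field, hg0, sub_zero, div_pos_iff] at hgx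
    rcases hgx with ⟨h1, _⟩ | ⟨_, h2⟩
    · exact h1
    · linarith [hx.1]
  have hmono : StrictMonoOn f (Icc z₀ t) := by
    apply strictMonoOn_of_deriv_pos (convex_Icc _ _)
    · exact fun x hx => ((hfg x (hIcc hx)).continuousAt).continuousWithinAt
    · intro x hx
      rw [interior_Icc] at hx
      rw [(hfg x (hIcc (Ioo_subset_Icc_self hx))).deriv]
      exact hgpos x hx
  have hlt : f z₀ < f t :=
    hmono (left_mem_Icc.2 hzt.le) (right_mem_Icc.2 hzt.le) hzt
  exact absurd (hmax t (hIcc (right_mem_Icc.2 hzt.le))) (not_le.2 hlt)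


lemma no_max_left {f g : ℝ → ℝ} {a b : ℝ} (hab : a < b)
    (hfc : ContinuousOn f (Set.Icc a b))
    (hfg : ∀ z ∈ Set.Ioo a b, HasDerivAt f (g z) z)
    (hgc : ContinuousOn g (Set.Icc a b))
    (hga : 0 < g a) :
    ∃ t ∈ Set.Icc a b, f a < f t := by
  have hga' : ContinuousWithinAt g (Icc a b) a := hgc.continuousWithinAt (left_mem_Icc.2 hab.le)
  have hev : ∀ᶠ z in 𝓝[Icc a b] a, 0 < g z :=
    hga'.eventually_const_lt hga
  rw [nhdsWithin_Icc_eq_nhdsGE hab] at hev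
  obtain ⟨u, hu, hsub⟩ := mem_nhdsGE_iff_exists_Ico_subset.1 hev
  set m := min u b with hm
  have ham : a < m := lt_min hu hab
  set t := (a + m) / 2 with ht
  have htm : t < m := by simp only [ht]; linarith
  have hat : a < t := by simp only [ht]; linarith
  have htb : t ≤ b := le_of_lt (lt_of_lt_of_le htm (min_le_right _ _))
  have hIcc : Icc a t ⊆ Icc a b := Icc_subset_Icc le_rfl htb
  have hmono : StrictMonoOn f (Icc a t) := by
    apply strictMonoOn_of_deriv_pos (convex_Icc _ _) (hfc.mono hIcc)
    intro x hx
    rw [interior_Icc] at hx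
    have hxab : x ∈ Ioo a b := ⟨hx.1, lt_of_lt_of_le hx.2 htb⟩
    rw [(hfg x hxab).deriv]
    exact hsub ⟨hx.1.le, lt_of_lt_of_le (lt_trans hx.2 htm) (min_le_left _ _)⟩
  exact ⟨t, ⟨hat.le, htb⟩, hmono (left_mem_Icc.2 hat.le) (right_mem_Icc.2 hat.le) hat⟩

lemma no_max_right {f g : ℝ → ℝ} {a b : ℝ} (hab : a < b)
    (hfc : ContinuousOn f (Set.Icc a b))
    (hfg : ∀ z ∈ Set.Ioo a b, HasDerivAt f (g z) z)
    (hgc : ContinuousOn g (Set.Icc a b))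
    (hgb : g b < 0) :
    ∃ t ∈ Set.Icc a b, f b < f t := by
  have hgb' : ContinuousWithinAt g (Icc a b) b := hgc.continuousWithinAt (right_mem_Icc.2 hab.le)
  have hev : ∀ᶠ z in 𝓝[Icc a b] b, g z < 0 :=
    hgb'.eventually_lt_const hgb
  rw [nhdsWithin_Icc_eq_nhdsLE hab] at hev
  obtain ⟨l, hl, hsub⟩ := mem_nhdsLE_iff_exists_Ioc_subset.1 hev
  set m := max l a with hm
  have hmb : m < b := max_lt hl hab
  set t := (m + b) / 2 with ht
  have hmt : m < t := by simp only [ht]; linarith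
  have htb : t < b := by simp only [ht]; linarith
  have hta : a ≤ t := le_of_lt (lt_of_le_of_lt (le_max_right l a) hmt)
  have hIcc : Icc t b ⊆ Icc a b := Icc_subset_Icc hta le_rfl
  have hanti : StrictAntiOn f (Icc t b) := by
    apply strictAntiOn_of_deriv_neg (convex_Icc _ _) (hfc.mono hIcc)
    intro x hx
    rw [interior_Icc] at hx
    have hxab : x ∈ Ioo a b := ⟨lt_of_le_of_lt hta hx.1, hx.2⟩
    rw [(hfg x hxab).deriv]
    exact hsub ⟨lt_of_le_of_lt (le_max_left l a) (lt_trans hmt hx.1), hx.2.le⟩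
  exact ⟨t, ⟨hta, htb.le⟩, hanti (left_mem_Icc.2 htb.le) (right_mem_Icc.2 htb.le) htb⟩

lemma key_side (zb σ ρ w B α γ : ℝ)
    (hz : 0 < zb) (hσ : 0 < σ) (hρ : 0 < ρ) (hw : 0 < w)
    (hγ : γ ∈ Set.Ioo (0:ℝ) 1)
    (k₁ k₂ : ℝ) (hk₁ : 0 ≤ k₁)
    (V₁ V₂ : ℝ → ℝ)
    (hV₁ : DifferentiableOn ℝ V₁ (Set.Icc 0 zb))
    (hV₁' : ContinuousOn (deriv V₁) (Set.Icc 0 zb))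
    (hV₁'' : ∀ z ∈ Set.Ioo 0 zb, DifferentiableAt ℝ (deriv V₁) z)
    (hV₂ : DifferentiableOn ℝ V₂ (Set.Icc 0 zb))
    (hV₂' : ContinuousOn (deriv V₂) (Set.Icc 0 zb))
    (hV₂'' : ∀ z ∈ Set.Ioo 0 zb, DifferentiableAt ℝ (deriv V₂) z)
    (heq₁ : ∀ z ∈ Set.Ioo 0 zb,
      -(σ^2/2) * deriv (deriv V₁) z + ρ * V₁ z -
        ((1-γ) * (γ/w) ^ (γ/(1-γ)) * (max 0 (deriv V₁ z)) ^ (1/(1-γ))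
          + k₁ * deriv V₁ z + z ^ α / B ^ (α-1)) = 0)
    (heq₂ : ∀ z ∈ Set.Ioo 0 zb,
      -(σ^2/2) * deriv (deriv V₂) z + ρ * V₂ z -
        ((1-γ) * (γ/w) ^ (γ/(1-γ)) * (max 0 (deriv V₂ z)) ^ (1/(1-γ))
          + k₂ * deriv V₂ z + z ^ α / B ^ (α-1)) = 0)
    (hbc₁0 : deriv V₁ 0 = 0) (hbc₁1 : deriv V₁ zb = 0)
    (hbc₂0 : deriv V₂ 0 = 0) (hbc₂1 : deriv V₂ zb = 0)
    (M : ℝ) (hM0 : 0 ≤ M)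
    (hgrad₁ : ∀ z ∈ Set.Icc 0 zb, 0 ≤ deriv V₁ z ∧ deriv V₁ z ≤ M)
    (hgrad₂ : ∀ z ∈ Set.Icc 0 zb, 0 ≤ deriv V₂ z ∧ deriv V₂ z ≤ M) :
    ∀ z ∈ Set.Icc 0 zb, ρ * (V₁ z - V₂ z) ≤ M * |k₁ - k₂| := by
  have h1γ : 0 < 1 - γ := by linarith [hγ.2]
  have hγ0 : 0 < γ := hγ.1
  set c₀ : ℝ := (γ/w) ^ (γ/(1-γ)) with hc₀def
  have hc₀ : 0 ≤ c₀ := Real.rpow_nonneg (by positivity) _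
  set L : ℝ := c₀ * M ^ (γ/(1-γ)) with hLdef
  have hL0 : 0 ≤ L := mul_nonneg hc₀ (Real.rpow_nonneg hM0 _)
  have hC0 : 0 < σ^2 + L*zb + k₁*zb + ρ*zb^2 := by
    have h1 : 0 < σ^2 := by positivity
    have h2 : 0 ≤ L*zb := mul_nonneg hL0 hz.le
    have h3 : 0 ≤ k₁*zb := mul_nonneg hk₁ hz.le
    have h4 : 0 ≤ ρ*zb^2 := by positivity
    linarith
  intro z hzmem
  -- reduce to: for all ε > 0
  suffices h : ∀ ε : ℝ, 0 < ε →
      ρ * (V₁ z - V₂ z) ≤ M * |k₁ - k₂| + ε * (σ^2 + L*zb + k₁*zb + ρ*zb^2) by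
    apply le_of_forall_pos_le_add
    intro δ hδ
    have := h (δ / (σ^2 + L*zb + k₁*zb + ρ*zb^2)) (div_pos hδ hC0)
    rwa [div_mul_cancel₀ _ (ne_of_gt hC0)] at this
  intro ε hε
  set W : ℝ → ℝ := fun y => V₁ y - V₂ y + ε * (y * zb - y^2) with hWdef
  set g : ℝ → ℝ := fun y => deriv V₁ y - deriv V₂ y + ε * (zb - 2*y) with hgdef
  have hWd : ∀ x ∈ Ioo 0 zb, HasDerivAt W (g x) x := by
    intro x hx
    have hx' : Icc 0 zb ∈ 𝓝 x := Icc_mem_nhds hx.1 hx.2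
    have h1 : HasDerivAt V₁ (deriv V₁ x) x := (hV₁.differentiableAt hx').hasDerivAt
    have h2 : HasDerivAt V₂ (deriv V₂ x) x := (hV₂.differentiableAt hx').hasDerivAt
    have h3 : HasDerivAt (fun y : ℝ => ε * (y * zb - y^2)) (ε * (zb - 2*x)) x := by
      have := (((hasDerivAt_id x).mul_const zb).sub (hasDerivAt_pow 2 x)).const_mul ε
      exact this.congr_deriv (by push_cast; ring)
    exact (h1.sub h2).add h3
  have hWc : ContinuousOn W (Icc 0 zb) := by
    apply ((hV₁.continuousOn.sub hV₂.continuousOn).add)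
    have : Continuous fun y : ℝ => ε * (y * zb - y ^ 2) := by fun_prop
    exact this.continuousOn
  have hgc : ContinuousOn g (Icc 0 zb) := by
    apply ((hV₁'.sub hV₂').add)
    have : Continuous fun y : ℝ => ε * (zb - 2 * y) := by fun_prop
    exact this.continuousOn
  obtain ⟨z₀, hz₀mem, hz₀max'⟩ := isCompact_Icc.exists_isMaxOn (nonempty_Icc.2 hz.le) hWc
  have hz₀max : ∀ y ∈ Icc 0 zb, W y ≤ W z₀ := fun y hy => hz₀max' hy
  have hz₀ : z₀ ∈ Ioo 0 zb := by
    constructor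
    · rcases hz₀mem.1.lt_or_eq with h | h
      · exact h
      · exfalso
        have hga : 0 < g 0 := by
          simp only [hgdef, hbc₁0, hbc₂0]
          have : 0 < ε * zb := mul_pos hε hz
          simpa using this
        obtain ⟨t, htmem, hlt⟩ := no_max_left hz hWc hWd hgc hga
        rw [h] at hlt
        exact absurd (hz₀max t htmem) (not_le.2 hlt)
    · rcases hz₀mem.2.lt_or_eq with h | h
      · exact h
      · exfalso
        have hgb : g zb < 0 := by
          simp only [hgdef, hbc₁1, hbc₂1]
          have : 0 < ε * zb := mul_pos hε hz
          nlinarith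
        obtain ⟨t, htmem, hlt⟩ := no_max_right hz hWc hWd hgc hgb
        rw [← h] at hlt
        exact absurd (hz₀max t htmem) (not_le.2 hlt)
  have hder : HasDerivAt g (deriv (deriv V₁) z₀ - deriv (deriv V₂) z₀ - 2*ε) z₀ := by
    have hd1 : HasDerivAt (deriv V₁) (deriv (deriv V₁) z₀) z₀ := (hV₁'' z₀ hz₀).hasDerivAt
    have hd2 : HasDerivAt (deriv V₂) (deriv (deriv V₂) z₀) z₀ := (hV₂'' z₀ hz₀).hasDerivAt
    have h3 : HasDerivAt (fun y : ℝ => ε * (zb - 2*y)) (-(2*ε)) z₀ := by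
      have := ((hasDerivAt_const z₀ zb).sub ((hasDerivAt_id z₀).const_mul 2)).const_mul ε
      exact this.congr_deriv (by ring)
    have := (hd1.sub hd2).add h3
    exact this.congr_deriv (by ring)
  obtain ⟨hg0, hc⟩ := interior_max_facts hz₀ hWd hder
    (fun y hy => hz₀max y (Ioo_subset_Icc_self hy))
  -- notation
  have hp := hgrad₁ z₀ (Ioo_subset_Icc_self hz₀)
  have hq := hgrad₂ z₀ (Ioo_subset_Icc_self hz₀)
  have hg0' : deriv V₁ z₀ - deriv V₂ z₀ = ε * (2*z₀ - zb) := by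
    simp only [hgdef] at hg0
    linarith
  have hpq_abs : |deriv V₁ z₀ - deriv V₂ z₀| ≤ ε * zb := by
    rw [hg0', abs_mul, abs_of_pos hε]
    apply mul_le_mul_of_nonneg_left _ hε.le
    rw [abs_le]
    constructor <;> [linarith [hz₀.1]; linarith [hz₀.2]]
  -- HJB equations at z₀
  have heq₁' := heq₁ z₀ hz₀
  have heq₂' := heq₂ z₀ hz₀
  rw [max_eq_right hp.1] at heq₁'
  rw [max_eq_right hq.1] at heq₂'
  -- Lipschitz bound on the nonlinear term
  have hr1 : (1:ℝ) ≤ 1/(1-γ) := by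
    rw [le_div_iff₀ h1γ]; linarith
  have hFF : (1-γ) * (γ/w) ^ (γ/(1-γ)) * (deriv V₁ z₀) ^ (1/(1-γ))
      - (1-γ) * (γ/w) ^ (γ/(1-γ)) * (deriv V₂ z₀) ^ (1/(1-γ)) ≤ L * (ε * zb) := by
    have hrexp : 1/(1-γ) - 1 = γ/(1-γ) := by field_simp; ring
    rcases le_total (deriv V₂ z₀) (deriv V₁ z₀) with hle | hle
    · have := rpow_diff_le hq.1 hle hp.2 hr1
      rw [hrexp] at this
      have h2 : (1-γ) * (γ/w) ^ (γ/(1-γ)) *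
          ((deriv V₁ z₀) ^ (1/(1-γ)) - (deriv V₂ z₀) ^ (1/(1-γ)))
          ≤ (1-γ) * (γ/w) ^ (γ/(1-γ)) *
            (1/(1-γ) * M ^ (γ/(1-γ)) * (deriv V₁ z₀ - deriv V₂ z₀)) :=
        mul_le_mul_of_nonneg_left this (by positivity)
      have h3 : (1-γ) * (γ/w) ^ (γ/(1-γ)) *
            (1/(1-γ) * M ^ (γ/(1-γ)) * (deriv V₁ z₀ - deriv V₂ z₀))
          = L * (deriv V₁ z₀ - deriv V₂ z₀) := by
        rw [hLdef, hc₀def]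
        field_simp
      have h4 : L * (deriv V₁ z₀ - deriv V₂ z₀) ≤ L * (ε * zb) :=
        mul_le_mul_of_nonneg_left (le_trans (le_abs_self _) hpq_abs) hL0
      calc (1-γ) * (γ/w) ^ (γ/(1-γ)) * (deriv V₁ z₀) ^ (1/(1-γ))
          - (1-γ) * (γ/w) ^ (γ/(1-γ)) * (deriv V₂ z₀) ^ (1/(1-γ))
          = (1-γ) * (γ/w) ^ (γ/(1-γ)) *
            ((deriv V₁ z₀) ^ (1/(1-γ)) - (deriv V₂ z₀) ^ (1/(1-γ))) := by ring
        _ ≤ L * (deriv V₁ z₀ - deriv V₂ z₀) := by rw [← h3]; exact h2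
        _ ≤ L * (ε * zb) := h4
    · have hmono : (deriv V₁ z₀) ^ (1/(1-γ)) ≤ (deriv V₂ z₀) ^ (1/(1-γ)) :=
        Real.rpow_le_rpow hp.1 hle (by linarith)
      have h5 : 0 ≤ L * (ε * zb) := mul_nonneg hL0 (by positivity)
      nlinarith [Real.rpow_nonneg (le_refl (0:ℝ)) (γ/(1-γ)), hc₀,
        mul_nonneg (mul_nonneg h1γ.le hc₀) (sub_nonneg.2 hmono)]
  -- k-term bound
  have hk_term : k₁ * deriv V₁ z₀ - k₂ * deriv V₂ z₀
      ≤ k₁ * (ε * zb) + |k₁ - k₂| * M := by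
    have h1 : k₁ * (deriv V₁ z₀ - deriv V₂ z₀) ≤ k₁ * (ε * zb) :=
      mul_le_mul_of_nonneg_left (le_trans (le_abs_self _) hpq_abs) hk₁
    have h2 : (k₁ - k₂) * deriv V₂ z₀ ≤ |k₁ - k₂| * deriv V₂ z₀ :=
      mul_le_mul_of_nonneg_right (le_abs_self _) hq.1
    have h3 : |k₁ - k₂| * deriv V₂ z₀ ≤ |k₁ - k₂| * M :=
      mul_le_mul_of_nonneg_left hq.2 (abs_nonneg _)
    nlinarith
  -- second-derivative bound
  have hA : σ^2/2 * (deriv (deriv V₁) z₀ - deriv (deriv V₂) z₀) ≤ σ^2 * ε := by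
    have h1 : deriv (deriv V₁) z₀ - deriv (deriv V₂) z₀ ≤ 2*ε := by linarith
    nlinarith [sq_nonneg σ]
  -- combine at z₀
  have hz₀bound : ρ * (V₁ z₀ - V₂ z₀)
      ≤ σ^2 * ε + L * (ε * zb) + k₁ * (ε * zb) + |k₁ - k₂| * M := by
    have hc₀eq : (γ/w) ^ (γ/(1-γ)) = c₀ := rfl
    linarith [heq₁', heq₂', hFF, hk_term, hA]
  -- transfer to z
  have hWz : V₁ z - V₂ z ≤ W z := by
    simp only [hWdef]
    nlinarith [mul_nonneg hzmem.1 (sub_nonneg.2 hzmem.2), hε.le]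
  have hWzz : W z ≤ W z₀ := hz₀max z hzmem
  have hWz₀ : W z₀ ≤ (V₁ z₀ - V₂ z₀) + ε * zb^2 := by
    simp only [hWdef]
    have h1 : z₀ * zb - z₀^2 ≤ zb^2 := by nlinarith [hz₀.1, hz₀.2, sq_nonneg z₀]
    nlinarith [mul_le_mul_of_nonneg_left h1 hε.le]
  have hfinal : V₁ z - V₂ z ≤ (V₁ z₀ - V₂ z₀) + ε * zb^2 := by linarith
  have hmul := mul_le_mul_of_nonneg_left hfinal hρ.le
  have : |k₁ - k₂| * M = M * |k₁ - k₂| := mul_comm _ _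
  nlinarith [hmul, hz₀bound, mul_pos hρ hε]

/-- Lipschitz dependence of the HJB solution on the drift
parameter k, in the sup norm. -/
theorem stmt_4 (zb σ ρ w B α γ : ℝ)
(hz : 0 < zb) (hσ : 0 < σ) (hρ : 0 < ρ) (hw : 0 < w) (hB : 0 < B)
    (hα : α ∈ Set.Ioo (0:ℝ) 1) (hγ : γ ∈ Set.Ioo (0:ℝ) 1)
    (k₁ k₂ : ℝ) (hk₁ : 0 ≤ k₁) (hk₂ : 0 ≤ k₂)
    (V₁ V₂ : ℝ → ℝ)
    (hV₁ : DifferentiableOn ℝ V₁ (Set.Icc 0 zb))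
    (hV₁' : ContinuousOn (deriv V₁) (Set.Icc 0 zb))
    (hV₁'' : ∀ z ∈ Set.Ioo 0 zb, DifferentiableAt ℝ (deriv V₁) z)
    (hV₁''c : ContinuousOn (deriv (deriv V₁)) (Set.Ioo 0 zb))
    (hV₂ : DifferentiableOn ℝ V₂ (Set.Icc 0 zb))
    (hV₂' : ContinuousOn (deriv V₂) (Set.Icc 0 zb))
    (hV₂'' : ∀ z ∈ Set.Ioo 0 zb, DifferentiableAt ℝ (deriv V₂) z)
    (hV₂''c : ContinuousOn (deriv (deriv V₂)) (Set.Ioo 0 zb))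
    (heq₁ : ∀ z ∈ Set.Ioo 0 zb,
      -(σ^2/2) * deriv (deriv V₁) z + ρ * V₁ z -
        ((1-γ) * (γ/w) ^ (γ/(1-γ)) * (max 0 (deriv V₁ z)) ^ (1/(1-γ))
          + k₁ * deriv V₁ z + z ^ α / B ^ (α-1)) = 0)
    (heq₂ : ∀ z ∈ Set.Ioo 0 zb,
      -(σ^2/2) * deriv (deriv V₂) z + ρ * V₂ z -
        ((1-γ) * (γ/w) ^ (γ/(1-γ)) * (max 0 (deriv V₂ z)) ^ (1/(1-γ))
          + k₂ * deriv V₂ z + z ^ α / B ^ (α-1)) = 0)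
    (hbc₁0 : deriv V₁ 0 = 0) (hbc₁1 : deriv V₁ zb = 0)
    (hbc₂0 : deriv V₂ 0 = 0) (hbc₂1 : deriv V₂ zb = 0)
    (M : ℝ) (hM : M = (zb ^ α / ((1-γ) * B ^ (α-1))) ^ (1-γ) * (w/γ) ^ γ)
    (hgrad₁ : ∀ z ∈ Set.Icc 0 zb, 0 ≤ deriv V₁ z ∧ deriv V₁ z ≤ M)
    (hgrad₂ : ∀ z ∈ Set.Icc 0 zb, 0 ≤ deriv V₂ z ∧ deriv V₂ z ≤ M) :
    ∀ z ∈ Set.Icc 0 zb, |V₁ z - V₂ z| ≤ M / ρ * |k₁ - k₂| := by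
  have h0mem : (0:ℝ) ∈ Set.Icc 0 zb := ⟨le_rfl, hz.le⟩
  have hM0 : 0 ≤ M := le_trans (hgrad₁ 0 h0mem).1 (hgrad₁ 0 h0mem).2
  have h12 := key_side zb σ ρ w B α γ hz hσ hρ hw hγ k₁ k₂ hk₁ V₁ V₂
    hV₁ hV₁' hV₁'' hV₂ hV₂' hV₂'' heq₁ heq₂ hbc₁0 hbc₁1 hbc₂0 hbc₂1 M hM0 hgrad₁ hgrad₂
  have h21 := key_side zb σ ρ w B α γ hz hσ hρ hw hγ k₂ k₁ hk₂ V₂ V₁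
    hV₂ hV₂' hV₂'' hV₁ hV₁' hV₁'' heq₂ heq₁ hbc₂0 hbc₂1 hbc₁0 hbc₁1 M hM0 hgrad₂ hgrad₁
  intro z hzmem
  have h1 := h12 z hzmem
  have h2 := h21 z hzmem
  rw [abs_sub_comm k₂ k₁] at h2
  rw [abs_le]
  constructor
  · rw [div_mul_eq_mul_div, neg_le, ← div_mul_eq_mul_div, div_mul_eq_mul_div,
      le_div_iff₀ hρ]
    nlinarith
  · rw [div_mul_eq_mul_div, le_div_iff₀ hρ]
    nlinarith
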